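/- For all λ, μ, ν > 0, the following strict inequalities hold: (λ/(λ+ν))·e^{−ν/μ} < λμ(1 − e^{−2ν/μ})/(2ν(λ+ν)) < λμ/((λ+ν)(μ+ν)). That is, for M/G/1/1-M bufferless systems with the same arrival rate λ, service rate μ and decision rate ν, the missing probability under deterministic service time is strictly smaller than under uniform service time, which is strictly smaller than under exponential service time. -/

import Mathlib

open Real

lemma lemA (x : ℝ) (hx : 0 < x) : 2*x*Real.exp (-x) < 1 - Real.exp (-2*x) := by
  have hf : ∀ y : ℝ, HasDerivAt (fun y : ℝ => 1 - Real.exp (-2*y) - 2*y*Real.exp (-y))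
      (2*Real.exp (-2*y) - (2*Real.exp (-y) - 2*y*Real.exp (-y))) y := by
    intro y
    have h1 : HasDerivAt (fun y : ℝ => -2*y) (-2) y := by
      simpa using (hasDerivAt_id y).const_mul (-2 : ℝ)
    have h2 : HasDerivAt (fun y : ℝ => -y) (-1) y := by
      exact (hasDerivAt_id' y).neg
    have he1 := h1.exp
    have he2 := h2.exp
    have h3 : HasDerivAt (fun y : ℝ => 2*y) (2) y := by
      simpa using (hasDerivAt_id y).const_mul (2 : ℝ)
    have h4 := h3.mul he2
    have h5 := ((hasDerivAt_const y (1:ℝ)).sub he1).sub h4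
    exact h5.congr_deriv (by ring)
  have hmono : StrictMonoOn (fun y : ℝ => 1 - Real.exp (-2*y) - 2*y*Real.exp (-y)) (Set.Ici 0) := by
    apply strictMonoOn_of_deriv_pos (convex_Ici 0)
    · exact (Continuous.sub (continuous_const.sub
        (Real.continuous_exp.comp (by continuity)))
        ((continuous_const.mul continuous_id).mul
          (Real.continuous_exp.comp (by continuity)))).continuousOn
    · intro y hy
      rw [interior_Ici] at hy
      rw [(hf y).deriv]
      have hlt : 1 - y < Real.exp (-y) := by
        have hy0 : 0 < y := hy
        have := Real.add_one_lt_exp (show (-y : ℝ) ≠ 0 from neg_ne_zero.mpr (ne_of_gt hy0))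
        linarith
      have he2 : Real.exp (-2*y) = Real.exp (-y) * Real.exp (-y) := by
        rw [← Real.exp_add]; ring_nf
      have hp : 0 < Real.exp (-y) := Real.exp_pos _
      rw [he2]
      nlinarith
  have h0 : (0:ℝ) ∈ Set.Ici (0:ℝ) := Set.self_mem_Ici
  have := hmono h0 (Set.mem_Ici.mpr hx.le) hx
  simp at this
  have h2x : -(2*x) = -2*x := by ring
  rw [h2x] at this
  linarith

lemma lemB (x : ℝ) (hx : 0 < x) : (1-x)*Real.exp x < (1+x)*Real.exp (-x) := by
  have hf : ∀ y : ℝ, HasDerivAt (fun y : ℝ => (1+y)*Real.exp (-y) - (1-y)*Real.exp y)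
      ((Real.exp (-y) + (1+y)*(Real.exp (-y)*(-1))) - ((-1)*Real.exp y + (1-y)*Real.exp y)) y := by
    intro y
    have h2 : HasDerivAt (fun y : ℝ => -y) (-1) y := by
      exact (hasDerivAt_id' y).neg
    have he2 := h2.exp
    have ha : HasDerivAt (fun y : ℝ => 1+y) 1 y := by
      exact ((hasDerivAt_const y (1:ℝ)).add (hasDerivAt_id' y)).congr_deriv (by ring)
    have hb : HasDerivAt (fun y : ℝ => 1-y) (-1) y := by
      exact ((hasDerivAt_const y (1:ℝ)).sub (hasDerivAt_id' y)).congr_deriv (by ring)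
    have h4 := ha.mul he2
    have h5 := hb.mul (Real.hasDerivAt_exp y)
    have := h4.sub h5
    exact this.congr_deriv (by ring)
  have hmono : StrictMonoOn (fun y : ℝ => (1+y)*Real.exp (-y) - (1-y)*Real.exp y) (Set.Ici 0) := by
    apply strictMonoOn_of_deriv_pos (convex_Ici 0)
    · exact (Continuous.sub
        ((continuous_const.add continuous_id).mul (Real.continuous_exp.comp (by continuity)))
        ((continuous_const.sub continuous_id).mul Real.continuous_exp)).continuousOn
    · intro y hy
      rw [interior_Ici] at hy
      rw [(hf y).deriv]
      have h1 : Real.exp (-y) < Real.exp y := Real.exp_lt_exp.mpr (by linarith [hy.out])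
      have hp : 0 < Real.exp (-y) := Real.exp_pos _
      have hy' : 0 < y := hy
      nlinarith
  have h0 : (0:ℝ) ∈ Set.Ici (0:ℝ) := Set.self_mem_Ici
  have := hmono h0 (Set.mem_Ici.mpr hx.le) hx
  simp at this
  linarith

/-- For M/G/1/1-M bufferless systems with the same arrival rate `lam`, service rate `mu`
and decision rate `nu`, the missing probability under deterministic service time is strictly
smaller than under uniform service time, which is strictly smaller than under exponential
service time:
`(λ/(λ+ν))·e^{−ν/μ} < λμ(1 − e^{−2ν/μ})/(2ν(λ+ν)) < λμ/((λ+ν)(μ+ν))`. -/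
theorem stmt_9 (lam mu nu : ℝ) (hlam : 0 < lam) (hmu : 0 < mu) (hnu : 0 < nu) :
    (lam / (lam + nu)) * Real.exp (-nu / mu)
      < lam * mu * (1 - Real.exp (-2 * nu / mu)) / (2 * nu * (lam + nu)) ∧
    lam * mu * (1 - Real.exp (-2 * nu / mu)) / (2 * nu * (lam + nu))
      < lam * mu / ((lam + nu) * (mu + nu)) := by
  have hx : 0 < nu / mu := div_pos hnu hmu
  have hrw1 : -nu / mu = -(nu/mu) := by ring
  have hrw2 : -2 * nu / mu = -2 * (nu/mu) := by ring
  rw [hrw1, hrw2]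
  set x := nu / mu with hxdef
  set E1 := Real.exp (-x) with hE1def
  set E2 := Real.exp (-2*x) with hE2def
  have hE1pos : 0 < E1 := Real.exp_pos _
  have hE2eq : E2 = E1 * E1 := by rw [hE2def, hE1def, ← Real.exp_add]; ring_nf
  have hA := lemA x hx
  have hB := lemB x hx
  have hinv : Real.exp x * E1 = 1 := by rw [hE1def, ← Real.exp_add]; simp
  have hlamnu : 0 < lam + nu := by linarith
  have hA' : 2 * nu * E1 < mu * (1 - E2) := by
    have h := mul_lt_mul_of_pos_left hA hmu
    have : mu * (2 * x * E1) = 2 * nu * E1 := by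
      rw [hxdef]; field_simp
    linarith [this ▸ h]
  have hB' : (1 - x) < (1 + x) * E2 := by
    have h := mul_lt_mul_of_pos_right hB hE1pos
    rw [hE2eq]
    nlinarith [h, hinv]
  have hkey : (mu + nu) * (1 - E2) < 2 * nu := by
    have h1 : (1 + x) * (1 - E2) < 2 * x := by nlinarith [hB']
    have h := mul_lt_mul_of_pos_left h1 hmu
    have e1 : mu * ((1 + x) * (1 - E2)) = (mu + nu) * (1 - E2) := by
      rw [hxdef]; field_simp
    have e2 : mu * (2 * x) = 2 * nu := by rw [hxdef]; field_simp
    linarith [e1 ▸ h, e2 ▸ h]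
  constructor
  · rw [div_mul_eq_mul_div, div_lt_div_iff₀ hlamnu (by positivity)]
    nlinarith [hA', mul_pos hlam hlamnu]
  · rw [div_lt_div_iff₀ (by positivity) (by positivity)]
    nlinarith [hkey, mul_pos (mul_pos hlam hmu) hlamnu]
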